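/- arXiv:1912.03534 — 5 statements merged into one kernel-verified Lean document; each statement's English description precedes it below -/
import Mathlib

section
/- Let χ̂: ℝ^N → ℂ satisfy |χ̂(ξ)| ≤ C_j (1+|ξ|)^{−j} for every positive integer j (with constants C_j), and assume ∫_{ℝ^N} χ̂ = 0. Then for every l ∈ ℕ there is a constant C_l' such that for all λ > 0 and η ∈ ℝ^N: |∫_{|η−ξ|<λ} χ̂(ξ) dξ| ≤ C_l' (1 + ||η| − λ|)^{−l}. -/
open MeasureTheory Real Metric

/-- If `χ̂ : ℝ^N → ℂ` satisfies `|χ̂(ξ)| ≤ C_j (1+|ξ|)^{-j}` for every positive integer `j`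
and `∫ χ̂ = 0`, then for every `l` there is `C_l'` with
`|∫_{|η-ξ|<λ} χ̂(ξ) dξ| ≤ C_l' (1+||η|-λ|)^{-l}` for all `λ > 0`, `η`. -/
theorem stmt1 (N : ℕ) (hN : 1 ≤ N) (χhat : EuclideanSpace ℝ (Fin N) → ℂ)
    (hdecay : ∀ j : ℕ, 0 < j → ∃ Cj : ℝ, ∀ ξ, ‖χhat ξ‖ ≤ Cj * (1 + ‖ξ‖) ^ (-(j : ℝ)))
    (hint : Integrable χhat)
    (hvanish : (∫ ξ, χhat ξ) = 0) :
    ∀ l : ℕ, ∃ C : ℝ, ∀ lam : ℝ, 0 < lam → ∀ η : EuclideanSpace ℝ (Fin N),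
      ‖∫ ξ in ball η lam, χhat ξ‖ ≤ C * (1 + |‖η‖ - lam|) ^ (-(l : ℝ)) := by
  intro l
  obtain ⟨C0, hC0⟩ := hdecay (l + N + 1) (by positivity)
  set f : EuclideanSpace ℝ (Fin N) → ℝ :=
    fun ξ => ‖χhat ξ‖ * (1 + ‖ξ‖) ^ (l : ℝ) with hf_def
  have hf_nonneg : ∀ ξ, 0 ≤ f ξ := fun ξ =>
    mul_nonneg (norm_nonneg _) (Real.rpow_nonneg (by positivity) _)
  have hg_int : Integrable (fun ξ : EuclideanSpace ℝ (Fin N) =>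
      C0 * (1 + ‖ξ‖) ^ (-((N : ℝ) + 1))) := by
    refine (integrable_one_add_norm ?_).const_mul C0
    rw [finrank_euclideanSpace_fin]
    linarith
  have hf_meas : AEStronglyMeasurable f volume := by
    refine hint.aestronglyMeasurable.norm.mul ?_
    exact ((continuous_const.add continuous_norm).rpow_const
      (fun x => Or.inr (by positivity))).aestronglyMeasurable
  have hf_int : Integrable f := by
    refine hg_int.mono' hf_meas (Filter.Eventually.of_forall fun ξ => ?_)
    have h1 : (0 : ℝ) < 1 + ‖ξ‖ := by positivity
    have h2 : ‖χhat ξ‖ ≤ C0 * (1 + ‖ξ‖) ^ (-((l + N + 1 : ℕ) : ℝ)) := hC0 ξ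
    have h3 : f ξ ≤ C0 * (1 + ‖ξ‖) ^ (-((l + N + 1 : ℕ) : ℝ)) * (1 + ‖ξ‖) ^ (l : ℝ) :=
      mul_le_mul_of_nonneg_right h2 (Real.rpow_nonneg h1.le _)
    rw [Real.norm_of_nonneg (hf_nonneg ξ)]
    refine h3.trans_eq ?_
    rw [mul_assoc, ← Real.rpow_add h1]
    congr 2
    push_cast
    ring
  have key : ∀ r : ℝ, 0 ≤ r → ∀ s : Set (EuclideanSpace ℝ (Fin N)), MeasurableSet s →
      (∀ ξ ∈ s, r ≤ ‖ξ‖) →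
      (∫ ξ in s, ‖χhat ξ‖) ≤ (∫ ξ, f ξ) * (1 + r) ^ (-(l : ℝ)) := by
    intro r hr s hs hsub
    have hpos : (0 : ℝ) < 1 + r := by linarith
    have hrp : (0 : ℝ) ≤ (1 + r) ^ (-(l : ℝ)) := Real.rpow_nonneg hpos.le _
    have h1 : ∀ ξ ∈ s, ‖χhat ξ‖ ≤ (1 + r) ^ (-(l : ℝ)) * f ξ := by
      intro ξ hξ
      have h2 : (1 + r) ^ (-(l : ℝ)) * (1 + r) ^ (l : ℝ) = 1 := by
        rw [← Real.rpow_add hpos]; simp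
      calc ‖χhat ξ‖ = (1 + r) ^ (-(l : ℝ)) * ((1 + r) ^ (l : ℝ) * ‖χhat ξ‖) := by
            rw [← mul_assoc, h2, one_mul]
        _ ≤ (1 + r) ^ (-(l : ℝ)) * ((1 + ‖ξ‖) ^ (l : ℝ) * ‖χhat ξ‖) := by
            exact mul_le_mul_of_nonneg_left (mul_le_mul_of_nonneg_right
              (Real.rpow_le_rpow hpos.le (by linarith [hsub ξ hξ]) (by positivity))
              (norm_nonneg _)) hrp
        _ = (1 + r) ^ (-(l : ℝ)) * f ξ := by rw [hf_def]; ring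
    calc (∫ ξ in s, ‖χhat ξ‖)
        ≤ ∫ ξ in s, (1 + r) ^ (-(l : ℝ)) * f ξ :=
          setIntegral_mono_on hint.norm.restrict ((hf_int.const_mul _).restrict) hs h1
      _ = (1 + r) ^ (-(l : ℝ)) * ∫ ξ in s, f ξ := integral_const_mul _ _
      _ ≤ (1 + r) ^ (-(l : ℝ)) * ∫ ξ, f ξ := by
          refine mul_le_mul_of_nonneg_left ?_ hrp
          exact setIntegral_le_integral hf_int (Filter.Eventually.of_forall hf_nonneg)
      _ = (∫ ξ, f ξ) * (1 + r) ^ (-(l : ℝ)) := mul_comm _ _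
  refine ⟨∫ ξ, f ξ, fun lam hlam η => ?_⟩
  rcases le_or_gt lam ‖η‖ with h | h
  · have hr : |‖η‖ - lam| = ‖η‖ - lam := abs_of_nonneg (by linarith)
    have hsub : ∀ ξ ∈ ball η lam, |‖η‖ - lam| ≤ ‖ξ‖ := by
      intro ξ hξ
      rw [mem_ball] at hξ
      have h2 : ‖η‖ - ‖ξ‖ ≤ ‖η - ξ‖ := norm_sub_norm_le η ξ
      have h3 : ‖η - ξ‖ = dist ξ η := by rw [dist_eq_norm, norm_sub_rev]
      rw [hr]; linarith
    calc ‖∫ ξ in ball η lam, χhat ξ‖ ≤ ∫ ξ in ball η lam, ‖χhat ξ‖ :=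
          norm_integral_le_integral_norm _
      _ ≤ _ := key _ (abs_nonneg _) _ measurableSet_ball hsub
  · have hcompl : ∫ ξ in ball η lam, χhat ξ = - ∫ ξ in (ball η lam)ᶜ, χhat ξ := by
      have h2 := integral_add_compl (measurableSet_ball (x := η) (ε := lam)) hint
      rw [hvanish] at h2
      exact eq_neg_of_add_eq_zero_left h2
    have hr : |‖η‖ - lam| = lam - ‖η‖ := by rw [abs_of_neg (by linarith)]; ring
    have hsub : ∀ ξ ∈ (ball η lam)ᶜ, |‖η‖ - lam| ≤ ‖ξ‖ := by
      intro ξ hξ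
      simp only [Set.mem_compl_iff, mem_ball, not_lt] at hξ
      have h2 : dist ξ η ≤ ‖ξ‖ + ‖η‖ := by
        rw [dist_eq_norm]
        exact (norm_sub_le ξ η)
      rw [hr]; linarith
    rw [hcompl, norm_neg]
    calc ‖∫ ξ in (ball η lam)ᶜ, χhat ξ‖ ≤ ∫ ξ in (ball η lam)ᶜ, ‖χhat ξ‖ :=
          norm_integral_le_integral_norm _
      _ ≤ _ := key _ (abs_nonneg _) _ measurableSet_ball.compl hsub
end

section
/- Let ψ: 𝕋^N → ℂ be a smooth 2π-periodic function with Fourier coefficients ψ_m satisfying |ψ_m| ≤ c_q (1+|m|)^{−q} for every q ∈ ℕ. Define, for j ∈ ℕ and n ∈ ℤ^N, (θ_j)_n = (2π)^{−N} Σ_{|m|² < j} ψ_{m−n}. Then for every l ∈ ℕ there is a constant C_l such that |(θ_j)_n| ≤ C_l (1 + ||n| − √j|)^{−l} for all j ∈ ℕ and n ∈ ℤ^N, provided additionally Σ_{m ∈ ℤ^N} ψ_m = 0 (i.e. ψ vanishes at the origin). -/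
open Real

/-- Euclidean norm of a lattice point `n ∈ ℤ^N`. -/
noncomputable def znorm {N : ℕ} (n : Fin N → ℤ) : ℝ :=
  Real.sqrt (∑ i, ((n i : ℝ)) ^ 2)

namespace Stmt4Aux

noncomputable def ev {N : ℕ} (n : Fin N → ℤ) : EuclideanSpace ℝ (Fin N) := WithLp.toLp 2 (fun i => (n i : ℝ))

lemma znorm_eq {N : ℕ} (n : Fin N → ℤ) : znorm n = ‖ev n‖ := by
  rw [EuclideanSpace.norm_eq, znorm]
  congr 1
  refine Finset.sum_congr rfl fun i _ => ?_
  rw [Real.norm_eq_abs, sq_abs]; rfl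

lemma ev_sub {N : ℕ} (a b : Fin N → ℤ) : ev (a - b) = ev a - ev b := by
  ext i
  simp [ev]

lemma znorm_nonneg {N : ℕ} (n : Fin N → ℤ) : 0 ≤ znorm n := Real.sqrt_nonneg _

lemma key_tri {N : ℕ} (k n : Fin N → ℤ) : |znorm (k + n) - znorm n| ≤ znorm k := by
  have h : ev k = ev (k + n) - ev n := by
    rw [← ev_sub, add_sub_cancel_right]
  rw [znorm_eq k, znorm_eq (k+n), znorm_eq n, h]
  exact abs_norm_sub_norm_le _ _

lemma abs_coord_le {N : ℕ} (k : Fin N → ℤ) (i : Fin N) : |(k i : ℝ)| ≤ znorm k := by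
  rw [← Real.sqrt_sq_eq_abs]
  apply Real.sqrt_le_sqrt
  exact Finset.single_le_sum (f := fun i => ((k i : ℝ))^2) (fun j _ => sq_nonneg _) (Finset.mem_univ i)

lemma znorm_le_sqrt {N : ℕ} {m : Fin N → ℤ} {j : ℕ} (h : (∑ i, (m i) ^ 2 : ℤ) < (j : ℤ)) :
    znorm m ≤ Real.sqrt j := by
  apply Real.sqrt_le_sqrt
  have : (∑ i, ((m i : ℝ)) ^ 2) = ((∑ i, (m i) ^ 2 : ℤ) : ℝ) := by push_cast; ring
  rw [this]
  exact_mod_cast h.le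

lemma sqrt_le_znorm {N : ℕ} {m : Fin N → ℤ} {j : ℕ} (h : ¬ ((∑ i, (m i) ^ 2 : ℤ) < (j : ℤ))) :
    Real.sqrt j ≤ znorm m := by
  apply Real.sqrt_le_sqrt
  have : (∑ i, ((m i : ℝ)) ^ 2) = ((∑ i, (m i) ^ 2 : ℤ) : ℝ) := by push_cast; ring
  rw [this]
  exact_mod_cast not_lt.mp h

lemma summable_base : Summable (fun t : ℤ => ((1 + |(t : ℝ)|) ^ 2)⁻¹) := by
  have hnat : Summable (fun n : ℕ => ((1 + (n : ℝ)) ^ 2)⁻¹) := by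
    have h := (summable_nat_add_iff (f := fun n : ℕ => ((n : ℝ) ^ 2)⁻¹) 1).mpr
      (by simpa [one_div] using (summable_one_div_nat_pow (p := 2)).mpr one_lt_two)
    refine h.congr fun n => ?_
    push_cast; ring_nf
  apply Summable.of_nat_of_neg
  · refine hnat.congr fun n => ?_
    simp
  · refine hnat.congr fun n => ?_
    simp

lemma summable_pi : ∀ N : ℕ, Summable (fun k : Fin N → ℤ => ∏ i, ((1 + |(k i : ℝ)|) ^ 2)⁻¹)
  | 0 => by
    have : (fun k : Fin 0 → ℤ => ∏ i, ((1 + |(k i : ℝ)|) ^ 2)⁻¹) = fun _ => 1 := by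
      funext k; simp
    rw [this]
    exact .of_finite
  | (N + 1) => by
    have h := (summable_base.mul_of_nonneg (summable_pi N)
      (fun t => by positivity) (fun k => Finset.prod_nonneg fun i _ => by positivity))
    rw [← (Fin.consEquiv (fun _ : Fin (N + 1) => ℤ)).summable_iff]
    refine h.congr fun p => ?_
    simp [Function.comp, Fin.prod_univ_succ, mul_comm]

lemma tail {N : ℕ} (ψc : (Fin N → ℤ) → ℂ)
    (hdecay : ∀ q : ℕ, ∃ c : ℝ, ∀ m, ‖ψc m‖ ≤ c * (1 + znorm m) ^ (-(q : ℝ)))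
    (l : ℕ) :
    ∃ C : ℝ, 0 ≤ C ∧ ∀ (r : ℝ), 0 ≤ r → ∀ (g : (Fin N → ℤ) → ℝ),
      (∀ k, g k = ‖ψc k‖ ∨ g k = 0) → (∀ k, g k ≠ 0 → r ≤ znorm k) →
      (∑' k, g k) ≤ C * (1 + r) ^ (-(l : ℝ)) := by
  obtain ⟨c, hc⟩ := hdecay (l + 2 * N)
  have hc0 : 0 ≤ c := by
    have h0 := hc 0
    have hz : znorm (0 : Fin N → ℤ) = 0 := by simp [znorm]
    rw [hz] at h0
    have h1 : (1 + (0:ℝ)) ^ (-((l + 2 * N : ℕ) : ℝ)) = 1 := by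
      rw [add_zero, Real.one_rpow]
    rw [h1, mul_one] at h0
    exact le_trans (norm_nonneg _) h0
  set K := ∑' k : Fin N → ℤ, ∏ i, ((1 + |(k i : ℝ)|) ^ 2)⁻¹ with hK
  have hK0 : 0 ≤ K := tsum_nonneg fun k => Finset.prod_nonneg fun i _ => by positivity
  refine ⟨c * K, mul_nonneg hc0 hK0, ?_⟩
  intro r hr g hor hP
  have hbound : ∀ k, g k ≤
      (c * (1 + r) ^ (-(l : ℝ))) * ∏ i, ((1 + |(k i : ℝ)|) ^ 2)⁻¹ := by
    intro k
    rcases eq_or_ne (g k) 0 with h0 | h0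
    case inr =>
      have hgk : g k = ‖ψc k‖ := (hor k).resolve_right h0
      rw [hgk]
      set x := znorm k with hx
      have hx0 : 0 ≤ x := znorm_nonneg k
      have hrx : r ≤ x := hP k h0
      have h1 : ‖ψc k‖ ≤ c * (1 + x) ^ (-((l + 2 * N : ℕ) : ℝ)) := hc k
      have h2 : (1 + x) ^ (-((l + 2 * N : ℕ) : ℝ)) = ((1 + x) ^ (l + 2 * N))⁻¹ := by
        rw [Real.rpow_neg (by positivity), Real.rpow_natCast]
      have h3 : (1 + r) ^ (-(l : ℝ)) = ((1 + r) ^ l)⁻¹ := by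
        rw [Real.rpow_neg (by positivity), Real.rpow_natCast]
      rw [h2] at h1
      rw [h3]
      refine h1.trans ?_
      rw [mul_assoc]
      refine mul_le_mul_of_nonneg_left ?_ hc0
      rw [Finset.prod_inv_distrib, ← mul_inv]
      refine inv_anti₀ (by positivity) ?_
      calc (1 + r) ^ l * ∏ i, (1 + |(k i : ℝ)|) ^ 2
          ≤ (1 + x) ^ l * ∏ i : Fin N, (1 + x) ^ 2 := by
            refine mul_le_mul ?_ ?_ (Finset.prod_nonneg fun i _ => by positivity) (by positivity)
            · exact pow_le_pow_left₀ (by linarith) (by linarith) l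
            · refine Finset.prod_le_prod (fun i _ => by positivity) fun i _ => ?_
              have := abs_coord_le k i
              refine pow_le_pow_left₀ (by positivity) (by linarith) 2
        _ = (1 + x) ^ (l + 2 * N) := by
            rw [Finset.prod_const, Finset.card_univ, Fintype.card_fin, ← pow_mul, ← pow_add]
    case inl =>
      rw [h0]
      positivity
  have hsumR : Summable (fun k : Fin N → ℤ =>
      (c * (1 + r) ^ (-(l : ℝ))) * ∏ i, ((1 + |(k i : ℝ)|) ^ 2)⁻¹) :=
    (summable_pi N).mul_left _
  have hsumL : Summable g := by
    refine Summable.of_nonneg_of_le (fun k => ?_) hbound hsumR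
    rcases hor k with h | h <;> rw [h] <;> positivity
  calc (∑' k, g k)
      ≤ ∑' k : Fin N → ℤ, (c * (1 + r) ^ (-(l : ℝ))) * ∏ i, ((1 + |(k i : ℝ)|) ^ 2)⁻¹ :=
        Summable.tsum_le_tsum hbound hsumL hsumR
    _ = (c * (1 + r) ^ (-(l : ℝ))) * K := tsum_mul_left
    _ = c * K * (1 + r) ^ (-(l : ℝ)) := by ring

end Stmt4Aux

/-- Let `ψ` have Fourier coefficients `ψ_m` with `|ψ_m| ≤ c_q (1+|m|)^{-q}` for every `q`,
summing to `0` (i.e. `ψ(0)=0`).  With `(θ_j)_n = (2π)^{-N} Σ_{|m|²<j} ψ_{m-n}`, for every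
`l` there is `C_l` with `|(θ_j)_n| ≤ C_l (1+||n|-√j|)^{-l}` for all `j ∈ ℕ`, `n ∈ ℤ^N`. -/
theorem stmt4 (N : ℕ) (hN : 1 ≤ N) (ψc : (Fin N → ℤ) → ℂ)
    (hdecay : ∀ q : ℕ, ∃ c : ℝ, ∀ m, ‖ψc m‖ ≤ c * (1 + znorm m) ^ (-(q : ℝ)))
    (hsum : Summable ψc) (hvanish : (∑' m, ψc m) = 0)
    (θ : ℕ → (Fin N → ℤ) → ℂ)
    (hθ : ∀ j n, θ j n =
      ((2 * π : ℝ) ^ (-(N : ℝ)) : ℝ) *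
        ∑' m : Fin N → ℤ, if (∑ i, (m i) ^ 2 : ℤ) < (j : ℤ) then ψc (m - n) else 0) :
    ∀ l : ℕ, ∃ C : ℝ, ∀ (j : ℕ) (n : Fin N → ℤ),
      ‖θ j n‖ ≤ C * (1 + |znorm n - Real.sqrt j|) ^ (-(l : ℝ)) := by
  classical
  intro l
  obtain ⟨C, hC0, hC⟩ := Stmt4Aux.tail ψc hdecay l
  refine ⟨C, ?_⟩
  intro j n
  set r : ℝ := |znorm n - Real.sqrt j| with hrdef
  have hr : 0 ≤ r := abs_nonneg _
  have hsub : Summable (fun m : Fin N → ℤ => ψc (m - n)) :=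
    ((Equiv.subRight n).summable_iff (f := ψc)).mpr hsum
  have hsubnorm : Summable (fun m : Fin N → ℤ => ‖ψc (m - n)‖) := hsub.norm
  have key : ∀ E : (Fin N → ℤ) → ℂ,
      (∀ m, E m = ψc (m - n) ∨ E m = 0) →
      (∀ m, E m ≠ 0 → r ≤ znorm (m - n)) →
      ‖∑' m, E m‖ ≤ C * (1 + r) ^ (-(l : ℝ)) := by
    intro E hor hgeom
    have hle : ∀ m, ‖E m‖ ≤ ‖ψc (m - n)‖ := by
      intro m
      rcases hor m with h | h <;> rw [h] <;> simp [norm_nonneg]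
    have hEnorm : Summable (fun m => ‖E m‖) :=
      Summable.of_nonneg_of_le (fun m => norm_nonneg _) hle hsubnorm
    have h1 : ‖∑' m, E m‖ ≤ ∑' m, ‖E m‖ := norm_tsum_le_tsum_norm hEnorm
    have h2 : (∑' m, ‖E m‖) = ∑' k, ‖E (k + n)‖ :=
      ((Equiv.addRight n).tsum_eq (f := fun m => ‖E m‖)).symm
    refine h1.trans ?_
    rw [h2]
    refine hC r hr (fun k => ‖E (k + n)‖) (fun k => ?_) (fun k hk => ?_)
    · show ‖E (k + n)‖ = ‖ψc k‖ ∨ ‖E (k + n)‖ = 0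
      rcases hor (k + n) with h | h
      · left; rw [h, add_sub_cancel_right]
      · right; rw [h, norm_zero]
    · have hk' : ‖E (k + n)‖ ≠ 0 := hk
      have hne : E (k + n) ≠ 0 := fun h => hk' (by rw [h, norm_zero])
      have := hgeom (k + n) hne
      rwa [add_sub_cancel_right] at this
  have tri : ∀ m : Fin N → ℤ, |znorm m - znorm n| ≤ znorm (m - n) := by
    intro m
    have := Stmt4Aux.key_tri (m - n) n
    rwa [sub_add_cancel] at this
  rw [hθ]
  set F : (Fin N → ℤ) → ℂ :=
    fun m => if (∑ i, (m i) ^ 2 : ℤ) < (j : ℤ) then ψc (m - n) else 0 with hFdef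
  have ha : (0:ℝ) < (2 * π) ^ (-(N : ℝ)) :=
    Real.rpow_pos_of_pos (by positivity) _
  have ha1 : (2 * π) ^ (-(N : ℝ)) ≤ 1 :=
    Real.rpow_le_one_of_one_le_of_nonpos (by nlinarith [Real.pi_gt_three])
      (by simp)
  have hTbound : ‖∑' m, F m‖ ≤ C * (1 + r) ^ (-(l : ℝ)) := by
    rcases le_or_gt (Real.sqrt j) (znorm n) with hcase | hcase
    · refine key F (fun m => ?_) (fun m hm => ?_)
      · by_cases h : (∑ i, (m i) ^ 2 : ℤ) < (j : ℤ) <;> simp [hFdef, h]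
      · have hcond : (∑ i, (m i) ^ 2 : ℤ) < (j : ℤ) := by
          by_contra h
          exact hm (by simp [hFdef, h])
        have hmle : znorm m ≤ Real.sqrt j := Stmt4Aux.znorm_le_sqrt hcond
        have : r = znorm n - Real.sqrt j := abs_of_nonneg (by linarith)
        rw [this]
        calc znorm n - Real.sqrt j ≤ znorm n - znorm m := by linarith
          _ ≤ |znorm m - znorm n| := by
              rw [abs_sub_comm]; exact le_abs_self _
          _ ≤ znorm (m - n) := tri m
    · -- complement trick
      set G : (Fin N → ℤ) → ℂ :=
        fun m => if (∑ i, (m i) ^ 2 : ℤ) < (j : ℤ) then 0 else ψc (m - n) with hGdef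
      have hFs : Summable F := by
        refine Summable.of_norm_bounded hsubnorm fun m => ?_
        by_cases h : (∑ i, (m i) ^ 2 : ℤ) < (j : ℤ) <;> simp [hFdef, h]
      have hGs : Summable G := by
        refine Summable.of_norm_bounded hsubnorm fun m => ?_
        by_cases h : (∑ i, (m i) ^ 2 : ℤ) < (j : ℤ) <;> simp [hGdef, h]
      have hadd : (∑' m, F m) + (∑' m, G m) = 0 := by
        rw [← Summable.tsum_add hFs hGs]
        have hpt : (fun m => F m + G m) = fun m : Fin N → ℤ => ψc (m - n) := by
          funext m
          by_cases h : (∑ i, (m i) ^ 2 : ℤ) < (j : ℤ) <;> simp [hFdef, hGdef, h]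
        rw [hpt]
        exact ((Equiv.subRight n).tsum_eq ψc).trans hvanish
      have hFG : (∑' m, F m) = -(∑' m, G m) := by linear_combination hadd
      rw [hFG, norm_neg]
      refine key G (fun m => ?_) (fun m hm => ?_)
      · by_cases h : (∑ i, (m i) ^ 2 : ℤ) < (j : ℤ) <;> simp [hGdef, h]
      · have hcond : ¬ ((∑ i, (m i) ^ 2 : ℤ) < (j : ℤ)) := by
          by_contra h
          exact hm (by simp [hGdef, h])
        have hmge : Real.sqrt j ≤ znorm m := Stmt4Aux.sqrt_le_znorm hcond
        have : r = Real.sqrt j - znorm n := by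
          rw [hrdef, abs_of_neg (by linarith), neg_sub]
        rw [this]
        calc Real.sqrt j - znorm n ≤ znorm m - znorm n := by linarith
          _ ≤ |znorm m - znorm n| := le_abs_self _
          _ ≤ znorm (m - n) := tri m
  rw [norm_mul, Complex.norm_real, Real.norm_eq_abs, abs_of_pos ha]
  calc (2 * π) ^ (-(N : ℝ)) * ‖∑' m, F m‖ ≤ 1 * ‖∑' m, F m‖ :=
        mul_le_mul_of_nonneg_right ha1 (norm_nonneg _)
    _ = ‖∑' m, F m‖ := one_mul _
    _ ≤ C * (1 + r) ^ (-(l : ℝ)) := hTbound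
end

section
/- With notation as in the previous lemma, set (Θ_j)_n = (θ_{j+1})_n − (θ_j)_n = (2π)^{−N} Σ_{|n−m|² = j} ψ_m. Then for every l ∈ ℕ there is C_l such that for every k ∈ ℕ and n ∈ ℤ^N: Σ_{j: k ≤ √j < k+1} |(Θ_j)_n|² ≤ C_l (1 + ||n| − k|)^{−l}. -/
open Real Finset

lemma znorm_nonneg {N : ℕ} (n : Fin N → ℤ) : 0 ≤ znorm n := Real.sqrt_nonneg _

/-- View a lattice point as a point of Euclidean space. -/
noncomputable def zE {N : ℕ} (n : Fin N → ℤ) : EuclideanSpace ℝ (Fin N) :=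
  WithLp.toLp 2 (fun i => (n i : ℝ))

lemma znorm_eq_norm {N : ℕ} (n : Fin N → ℤ) : znorm n = ‖zE n‖ := by
  rw [EuclideanSpace.norm_eq, znorm]
  congr 1
  refine Finset.sum_congr rfl fun i _ => ?_
  simp [zE, sq_abs]

lemma abs_coord_le_znorm {N : ℕ} (n : Fin N → ℤ) (i : Fin N) :
    |(n i : ℝ)| ≤ znorm n := by
  rw [znorm, ← Real.sqrt_sq_eq_abs]
  apply Real.sqrt_le_sqrt
  exact Finset.single_le_sum (f := fun j => ((n j : ℝ)) ^ 2)
    (fun j _ => sq_nonneg _) (Finset.mem_univ i)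

lemma znorm_rev_triangle {N : ℕ} (n m : Fin N → ℤ) :
    |znorm n - znorm (fun i => n i - m i)| ≤ znorm m := by
  rw [znorm_eq_norm, znorm_eq_norm, znorm_eq_norm]
  have h : zE n - zE (fun i => n i - m i) = zE m := by
    ext i
    simp [zE]
  calc |‖zE n‖ - ‖zE (fun i => n i - m i)‖| ≤ ‖zE n - zE (fun i => n i - m i)‖ :=
        abs_norm_sub_norm_le _ _
    _ = ‖zE m‖ := by rw [h]

lemma summable_int_aux : Summable (fun z : ℤ => ((1 + |(z : ℝ)|) ^ 2)⁻¹) := by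
  have hnat : Summable (fun n : ℕ => ((1 + (n : ℝ)) ^ 2)⁻¹) := by
    have h2 : Summable (fun n : ℕ => (((n : ℝ)) ^ 2)⁻¹) :=
      Real.summable_nat_pow_inv.mpr one_lt_two
    have := h2.comp_injective Nat.succ_injective
    refine this.congr fun n => ?_
    simp [Nat.succ_eq_add_one]
    ring_nf
  apply Summable.of_nat_of_neg
  · refine hnat.congr fun n => ?_
    simp
  · refine hnat.congr fun n => ?_
    simp

lemma summable_prod_aux (N : ℕ) :
    Summable (fun m : Fin N → ℤ => ∏ i, ((1 + |(m i : ℝ)|) ^ 2)⁻¹) := by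
  induction N with
  | zero =>
    have : Finite (Fin 0 → ℤ) := by infer_instance
    exact Summable.of_finite
  | succ n ih =>
    have h := summable_int_aux.mul_of_nonneg ih
      (fun z => by positivity) (fun m => Finset.prod_nonneg fun i _ => by positivity)
    rw [← Equiv.summable_iff (Fin.consEquiv (fun _ : Fin (n + 1) => ℤ))]
    refine h.congr fun p => ?_
    show ((1 + |(p.1 : ℝ)|) ^ 2)⁻¹ * ∏ i, ((1 + |(p.2 i : ℝ)|) ^ 2)⁻¹ =
      ∏ i, ((1 + |((Fin.cons p.1 p.2 : Fin (n + 1) → ℤ) i : ℝ)|) ^ 2)⁻¹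
    rw [Fin.prod_univ_succ]
    simp

/-- With `(Θ_j)_n = (2π)^{-N} Σ_{|n-m|²=j} ψ_m` and `|ψ_m| ≤ c_q (1+|m|)^{-q}` for all `q`,
for every `l` there is `C_l` such that for every `k ∈ ℕ`, `n ∈ ℤ^N`:
`Σ_{j : k ≤ √j < k+1} |(Θ_j)_n|² ≤ C_l (1+||n|-k|)^{-l}`.  The range `k ≤ √j < k+1`
is exactly `k² ≤ j < (k+1)²`. -/
theorem stmt5 (N : ℕ) (hN : 1 ≤ N) (ψc : (Fin N → ℤ) → ℂ)
    (hdecay : ∀ q : ℕ, ∃ c : ℝ, ∀ m, ‖ψc m‖ ≤ c * (1 + znorm m) ^ (-(q : ℝ)))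
    (hsum : Summable ψc)
    (Θ : ℕ → (Fin N → ℤ) → ℂ)
    (hΘ : ∀ j n, Θ j n =
      ((2 * π : ℝ) ^ (-(N : ℝ)) : ℝ) *
        ∑' m : Fin N → ℤ, if (∑ i, (n i - m i) ^ 2 : ℤ) = (j : ℤ) then ψc m else 0) :
    ∀ l : ℕ, ∃ C : ℝ, ∀ (k : ℕ) (n : Fin N → ℤ),
      ∑ j ∈ Finset.Ico (k ^ 2) ((k + 1) ^ 2), ‖Θ j n‖ ^ 2 ≤
        C * (1 + |znorm n - k|) ^ (-(l : ℝ)) := by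
  intro l
  obtain ⟨c₀, hc₀⟩ := hdecay (l + 2 * N)
  set c : ℝ := max c₀ 0 with hcdef
  have hc0 : 0 ≤ c := le_max_right _ _
  have hcb : ∀ m, ‖ψc m‖ ≤ c * (1 + znorm m) ^ (-((l + 2 * N : ℕ) : ℝ)) := by
    intro m
    refine (hc₀ m).trans (mul_le_mul_of_nonneg_right (le_max_left _ _) ?_)
    exact Real.rpow_nonneg (by linarith [znorm_nonneg m]) _
  set ρ : ℝ := (2 * π : ℝ) ^ (-(N : ℝ)) with hρdef
  have hρ0 : 0 < ρ := Real.rpow_pos_of_pos (by positivity) _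
  set w : (Fin N → ℤ) → ℝ := fun m => ∏ i, ((1 + |(m i : ℝ)|) ^ 2)⁻¹ with hwdef
  have hw0 : ∀ m, 0 ≤ w m := fun m => Finset.prod_nonneg fun i _ => by positivity
  have hwsum : Summable w := summable_prod_aux N
  set S : ℝ := ∑' m, w m with hSdef
  have hS0 : 0 ≤ S := tsum_nonneg hw0
  have hψnorm : Summable (fun m => ‖ψc m‖) := summable_norm_iff.mpr hsum
  refine ⟨(ρ * c * 2 ^ l * S) ^ 2, fun k n => ?_⟩
  set x : ℝ := |znorm n - k| with hxdef
  have hx0 : 0 ≤ x := abs_nonneg _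
  have hx1 : (1 : ℝ) ≤ (1 + x) ^ l := one_le_pow₀ (by linarith)
  -- indicator functions
  set g : ℕ → (Fin N → ℤ) → ℝ := fun j m =>
    if (∑ i, (n i - m i) ^ 2 : ℤ) = (j : ℤ) then ‖ψc m‖ else 0 with hgdef
  have hg0 : ∀ j m, 0 ≤ g j m := by
    intro j m; simp only [hgdef]; split <;> positivity
  have hgle : ∀ j m, g j m ≤ ‖ψc m‖ := by
    intro j m; simp only [hgdef]; split
    · exact le_refl _
    · positivity
  have hgsum : ∀ j, Summable (g j) := fun j =>
    Summable.of_nonneg_of_le (hg0 j) (hgle j) hψnorm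
  set K : ℝ := c * 2 ^ l * ((1 + x) ^ l)⁻¹ with hKdef
  have hK0 : 0 ≤ K := by positivity
  -- pointwise key bound
  have key : ∀ m : Fin N → ℤ,
      (if ((k : ℤ) ^ 2 ≤ ∑ i, (n i - m i) ^ 2 ∧ (∑ i, (n i - m i) ^ 2 : ℤ) < ((k : ℤ) + 1) ^ 2)
        then ‖ψc m‖ else 0) ≤ K * w m := by
    intro m
    split
    case isFalse => positivity
    case isTrue h =>
      obtain ⟨hs1, hs2⟩ := h
      set s : ℤ := ∑ i, (n i - m i) ^ 2 with hsdef
      have hs0 : (0 : ℤ) ≤ s := Finset.sum_nonneg fun i _ => sq_nonneg _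
      set z : ℝ := znorm m with hzdef
      have hz0 : 0 ≤ z := znorm_nonneg m
      set r : ℝ := znorm (fun i => n i - m i) with hrdef
      have hr_eq : r = Real.sqrt ((s : ℝ)) := by
        rw [hrdef, znorm]
        congr 1
        rw [hsdef]
        push_cast
        rfl
      have hr1 : (k : ℝ) ≤ r := by
        rw [hr_eq]
        calc (k : ℝ) = Real.sqrt ((k : ℝ) ^ 2) := (Real.sqrt_sq (by positivity)).symm
          _ ≤ Real.sqrt ((s : ℝ)) := Real.sqrt_le_sqrt (by exact_mod_cast hs1)
      have hr2 : r ≤ (k : ℝ) + 1 := by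
        rw [hr_eq]
        calc Real.sqrt ((s : ℝ)) ≤ Real.sqrt (((k : ℝ) + 1) ^ 2) :=
              Real.sqrt_le_sqrt (by exact_mod_cast hs2.le)
          _ = (k : ℝ) + 1 := Real.sqrt_sq (by positivity)
      have htri : |znorm n - r| ≤ z := znorm_rev_triangle n m
      have hxz : 1 + x ≤ 2 * (1 + z) := by
        have h1 : x ≤ |znorm n - r| + |r - (k : ℝ)| := abs_sub_le _ _ _
        have h2 : |r - (k : ℝ)| ≤ 1 := abs_le.mpr ⟨by linarith, by linarith⟩
        linarith
      -- convert rpow to pow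
      have hZpos : (0 : ℝ) < 1 + z := by linarith
      have hrpow : (1 + z) ^ (-((l + 2 * N : ℕ) : ℝ)) = ((1 + z) ^ (l + 2 * N))⁻¹ := by
        rw [Real.rpow_neg hZpos.le, Real.rpow_natCast]
      have hP : ∏ i, (1 + |(m i : ℝ)|) ^ 2 ≤ (1 + z) ^ (2 * N) := by
        have : ∀ i ∈ Finset.univ, (1 + |(m i : ℝ)|) ^ 2 ≤ (1 + z) ^ 2 := by
          intro i _
          have := abs_coord_le_znorm m i
          apply pow_le_pow_left₀ (by positivity)
          linarith
        calc ∏ i, (1 + |(m i : ℝ)|) ^ 2 ≤ ∏ _i : Fin N, (1 + z) ^ 2 :=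
              Finset.prod_le_prod (fun i _ => by positivity) this
          _ = ((1 + z) ^ 2) ^ N := by rw [Finset.prod_const, Finset.card_univ, Fintype.card_fin]
          _ = (1 + z) ^ (2 * N) := by rw [← pow_mul]
      have hX : (1 + x) ^ l ≤ 2 ^ l * (1 + z) ^ l := by
        calc (1 + x) ^ l ≤ (2 * (1 + z)) ^ l := pow_le_pow_left₀ (by linarith) hxz l
          _ = 2 ^ l * (1 + z) ^ l := mul_pow _ _ _
      have hPpos : (0 : ℝ) < ∏ i, (1 + |(m i : ℝ)|) ^ 2 :=
        Finset.prod_pos fun i _ => by positivity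
      have hApos : (0 : ℝ) < (1 + x) ^ l := by positivity
      have hwP : w m = (∏ i, (1 + |(m i : ℝ)|) ^ 2)⁻¹ := by
        rw [hwdef]
        exact Finset.prod_inv_distrib _
      have hprod_le : (1 + x) ^ l * ∏ i, (1 + |(m i : ℝ)|) ^ 2 ≤
          2 ^ l * (1 + z) ^ (l + 2 * N) := by
        calc (1 + x) ^ l * ∏ i, (1 + |(m i : ℝ)|) ^ 2
            ≤ (2 ^ l * (1 + z) ^ l) * ((1 + z) ^ (2 * N)) :=
              mul_le_mul hX hP hPpos.le (by positivity)
          _ = 2 ^ l * (1 + z) ^ (l + 2 * N) := by rw [pow_add]; ring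
      have hinv : ((1 + z) ^ (l + 2 * N))⁻¹ ≤
          2 ^ l * ((1 + x) ^ l)⁻¹ * (∏ i, (1 + |(m i : ℝ)|) ^ 2)⁻¹ := by
        have hstep : ((1 + z) ^ (l + 2 * N))⁻¹ ≤
            2 ^ l / ((1 + x) ^ l * ∏ i, (1 + |(m i : ℝ)|) ^ 2) := by
          rw [le_div_iff₀ (by positivity)]
          have hzq : (0 : ℝ) < (1 + z) ^ (l + 2 * N) := by positivity
          rw [inv_mul_le_iff₀ hzq]
          calc (1 + x) ^ l * ∏ i, (1 + |(m i : ℝ)|) ^ 2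
              ≤ 2 ^ l * (1 + z) ^ (l + 2 * N) := hprod_le
            _ = (1 + z) ^ (l + 2 * N) * 2 ^ l := by ring
        calc ((1 + z) ^ (l + 2 * N))⁻¹
            ≤ 2 ^ l / ((1 + x) ^ l * ∏ i, (1 + |(m i : ℝ)|) ^ 2) := hstep
          _ = 2 ^ l * ((1 + x) ^ l)⁻¹ * (∏ i, (1 + |(m i : ℝ)|) ^ 2)⁻¹ := by
              rw [div_eq_mul_inv, mul_inv, ← mul_assoc]
      calc ‖ψc m‖ ≤ c * (1 + z) ^ (-((l + 2 * N : ℕ) : ℝ)) := hcb m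
        _ = c * ((1 + z) ^ (l + 2 * N))⁻¹ := by rw [hrpow]
        _ ≤ c * (2 ^ l * ((1 + x) ^ l)⁻¹ * (∏ i, (1 + |(m i : ℝ)|) ^ 2)⁻¹) :=
            mul_le_mul_of_nonneg_left hinv hc0
        _ = K * w m := by rw [hKdef, hwP]; ring
  -- per-j norm bound
  have hΘle : ∀ j, ‖Θ j n‖ ≤ ρ * ∑' m, g j m := by
    intro j
    rw [hΘ j n, norm_mul, Complex.norm_real, Real.norm_eq_abs, abs_of_pos hρ0]
    apply mul_le_mul_of_nonneg_left _ hρ0.le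
    have heq : (fun m : Fin N → ℤ =>
        ‖if (∑ i, (n i - m i) ^ 2 : ℤ) = (j : ℤ) then ψc m else 0‖) = g j := by
      funext m
      simp only [hgdef]
      split <;> simp
    calc ‖∑' m : Fin N → ℤ, if (∑ i, (n i - m i) ^ 2 : ℤ) = (j : ℤ) then ψc m else 0‖
        ≤ ∑' m : Fin N → ℤ, ‖if (∑ i, (n i - m i) ^ 2 : ℤ) = (j : ℤ) then ψc m else 0‖ :=
          norm_tsum_le_tsum_norm (heq ▸ hgsum j)
      _ = ∑' m, g j m := by rw [heq]
  -- collapse the j-sum into an indicator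
  have hind : ∀ m : Fin N → ℤ, ∑ j ∈ Finset.Ico (k ^ 2) ((k + 1) ^ 2), g j m =
      (if ((k : ℤ) ^ 2 ≤ ∑ i, (n i - m i) ^ 2 ∧
          (∑ i, (n i - m i) ^ 2 : ℤ) < ((k : ℤ) + 1) ^ 2) then ‖ψc m‖ else 0) := by
    intro m
    have hs0 : (0 : ℤ) ≤ ∑ i, (n i - m i) ^ 2 := Finset.sum_nonneg fun i _ => sq_nonneg _
    have h1 : ∀ j, g j m =
        if (∑ i, (n i - m i) ^ 2 : ℤ).toNat = j then ‖ψc m‖ else 0 := by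
      intro j
      simp only [hgdef]
      refine if_congr ?_ rfl rfl
      omega
    rw [Finset.sum_congr rfl fun j _ => h1 j, Finset.sum_ite_eq]
    refine if_congr ?_ rfl rfl
    rw [Finset.mem_Ico]
    have h2 : ((k : ℤ)) ^ 2 = ((k ^ 2 : ℕ) : ℤ) := by push_cast; ring
    have h3 : ((k : ℤ) + 1) ^ 2 = (((k + 1) ^ 2 : ℕ) : ℤ) := by push_cast; ring
    rw [h2, h3]
    omega
  have hindsum : Summable (fun m : Fin N → ℤ =>
      if ((k : ℤ) ^ 2 ≤ ∑ i, (n i - m i) ^ 2 ∧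
          (∑ i, (n i - m i) ^ 2 : ℤ) < ((k : ℤ) + 1) ^ 2) then ‖ψc m‖ else 0) := by
    refine Summable.of_nonneg_of_le (fun m => ?_) (fun m => ?_) hψnorm
    · split <;> positivity
    · split
      · exact le_refl _
      · positivity
  -- sum the norm bounds over j
  have step1 : ∑ j ∈ Finset.Ico (k ^ 2) ((k + 1) ^ 2), ‖Θ j n‖ ≤ ρ * (K * S) := by
    calc ∑ j ∈ Finset.Ico (k ^ 2) ((k + 1) ^ 2), ‖Θ j n‖
        ≤ ∑ j ∈ Finset.Ico (k ^ 2) ((k + 1) ^ 2), ρ * ∑' m, g j m :=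
          Finset.sum_le_sum fun j _ => hΘle j
      _ = ρ * ∑ j ∈ Finset.Ico (k ^ 2) ((k + 1) ^ 2), ∑' m, g j m := by
          rw [Finset.mul_sum]
      _ = ρ * ∑' m, ∑ j ∈ Finset.Ico (k ^ 2) ((k + 1) ^ 2), g j m := by
          rw [Summable.tsum_finsetSum fun j _ => hgsum j]
      _ = ρ * ∑' m : Fin N → ℤ, (if ((k : ℤ) ^ 2 ≤ ∑ i, (n i - m i) ^ 2 ∧
            (∑ i, (n i - m i) ^ 2 : ℤ) < ((k : ℤ) + 1) ^ 2) then ‖ψc m‖ else 0) := by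
          rw [tsum_congr hind]
      _ ≤ ρ * ∑' m, K * w m := by
          refine mul_le_mul_of_nonneg_left ?_ hρ0.le
          exact Summable.tsum_le_tsum key hindsum (hwsum.mul_left K)
      _ = ρ * (K * S) := by rw [tsum_mul_left]
  -- conclude
  have hfin : ∑ j ∈ Finset.Ico (k ^ 2) ((k + 1) ^ 2), ‖Θ j n‖ ^ 2 ≤
      (∑ j ∈ Finset.Ico (k ^ 2) ((k + 1) ^ 2), ‖Θ j n‖) ^ 2 :=
    Finset.sum_sq_le_sq_sum_of_nonneg fun j _ => norm_nonneg _
  have h2 : (∑ j ∈ Finset.Ico (k ^ 2) ((k + 1) ^ 2), ‖Θ j n‖) ^ 2 ≤ (ρ * (K * S)) ^ 2 :=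
    pow_le_pow_left₀ (Finset.sum_nonneg fun j _ => norm_nonneg _) step1 2
  have hrw : (1 + x) ^ (-(l : ℝ)) = ((1 + x) ^ l)⁻¹ := by
    rw [← Real.rpow_natCast (1 + x) l, ← Real.rpow_neg (by linarith)]
  rw [hrw]
  have hABC : (ρ * (K * S)) ^ 2 = (ρ * c * 2 ^ l * S) ^ 2 * (((1 + x) ^ l)⁻¹) ^ 2 := by
    rw [hKdef]; ring
  have hinvle : (((1 + x) ^ l)⁻¹) ^ 2 ≤ ((1 + x) ^ l)⁻¹ := by
    have h01 : ((1 + x) ^ l)⁻¹ ≤ 1 := by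
      simpa using inv_anti₀ zero_lt_one hx1
    nlinarith [inv_nonneg.mpr (le_trans zero_le_one hx1)]
  calc ∑ j ∈ Finset.Ico (k ^ 2) ((k + 1) ^ 2), ‖Θ j n‖ ^ 2
      ≤ (ρ * (K * S)) ^ 2 := le_trans hfin h2
    _ = (ρ * c * 2 ^ l * S) ^ 2 * (((1 + x) ^ l)⁻¹) ^ 2 := hABC
    _ ≤ (ρ * c * 2 ^ l * S) ^ 2 * ((1 + x) ^ l)⁻¹ :=
        mul_le_mul_of_nonneg_left hinvle (by positivity)
end

section
/- If (θ_j)_n satisfies |(θ_j)_n| ≤ C_l (1 + ||n| − √j|)^{−l} for all l (with constants C_l), then Σ_{j=0}^∞ |(θ_j)_n|² ≤ C |n| for all n ∈ ℤ^N with n ≠ 0, with C independent of n. -/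
open Real Finset

-- Lemma A: tail sum
lemma tailA (x : ℝ) (hx : 1 ≤ x) (T : Finset ℕ) :
    ∑ m ∈ T, ((x + m)⁻¹) ^ 2 ≤ 2 / x := by
  have hx0 : (0:ℝ) < x := lt_of_lt_of_le one_pos hx
  have key : ∀ M : ℕ, ∑ m ∈ range (M+1), ((x + m)⁻¹) ^ 2 ≤ 1/x^2 + 1/x - 1/(x+M) := by
    intro M
    induction M with
    | zero => simp
    | succ M ih =>
      rw [Finset.sum_range_succ]
      have h1 : (0:ℝ) < x + M := by positivity
      have h2 : (0:ℝ) < x + (M+1:ℕ) := by positivity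
      have h3 : ((x + (M+1:ℕ))⁻¹) ^ 2 ≤ 1/(x+M) - 1/(x+(M+1:ℕ)) := by
        push_cast
        rw [div_sub_div _ _ (ne_of_gt h1) (by push_cast at h2; linarith)]
        rw [inv_pow, inv_eq_one_div]
        rw [div_le_div_iff₀ (by positivity) (by positivity)]
        nlinarith
      push_cast at *
      linarith
  rcases T.eq_empty_or_nonempty with rfl | hT
  · simp; positivity
  · have hsub : T ⊆ range (T.sup id + 1) := by
      intro m hm
      rw [Finset.mem_range]
      exact Nat.lt_succ_of_le (Finset.le_sup (f := id) hm)
    calc ∑ m ∈ T, ((x + m)⁻¹) ^ 2 ≤ ∑ m ∈ range (T.sup id + 1), ((x + m)⁻¹) ^ 2 := by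
          apply Finset.sum_le_sum_of_subset_of_nonneg hsub
          intro i _ _; positivity
      _ ≤ 1/x^2 + 1/x - 1/(x + T.sup id) := key _
      _ ≤ 2 / x := by
          have h1 : (0:ℝ) < x + T.sup id := by positivity
          have h2 : 1/x^2 ≤ 1/x := by
            apply div_le_div_of_nonneg_left (by norm_num) hx0
            nlinarith
          have h3 : 0 < 1/(x + T.sup id) := by positivity
          have h4 : 2/x = 1/x + 1/x := by ring
          linarith

-- Lemma B: key sum over lattice points
lemma keyB (x y : ℝ) (hx : 1 ≤ x) (s : Finset ℕ) :
    ∑ j ∈ s, ((x + |y - j|)⁻¹) ^ 2 ≤ 4 / x := by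
  have hx0 : (0:ℝ) < x := lt_of_lt_of_le one_pos hx
  set P : ℕ → Prop := fun j => (j:ℝ) ≤ y with hP
  have hsplit := Finset.sum_filter_add_sum_filter_not s P (fun j => ((x + |y - j|)⁻¹) ^ 2)
  -- low part
  have hlow : ∑ j ∈ s.filter P, ((x + |y - j|)⁻¹) ^ 2 ≤ 2 / x := by
    set e : ℕ → ℕ := fun j => (⌊y⌋ - j).toNat with he
    have hinj : ∀ a ∈ s.filter P, ∀ b ∈ s.filter P, e a = e b → a = b := by
      intro a ha b hb hab
      simp only [Finset.mem_filter, hP] at ha hb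
      have h1 : (a:ℤ) ≤ ⌊y⌋ := by exact_mod_cast Int.le_floor.2 (by exact_mod_cast ha.2)
      have h2 : (b:ℤ) ≤ ⌊y⌋ := by exact_mod_cast Int.le_floor.2 (by exact_mod_cast hb.2)
      simp only [he] at hab
      omega
    calc ∑ j ∈ s.filter P, ((x + |y - j|)⁻¹) ^ 2
        ≤ ∑ j ∈ s.filter P, ((x + e j)⁻¹) ^ 2 := by
          apply Finset.sum_le_sum
          intro j hj
          simp only [Finset.mem_filter, hP] at hj
          have h1 : (j:ℤ) ≤ ⌊y⌋ := Int.le_floor.2 (by exact_mod_cast hj.2)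
          have h2 : ((e j : ℝ)) ≤ |y - j| := by
            have h3 : ((e j : ℤ) : ℝ) = (⌊y⌋ : ℝ) - j := by
              simp only [he]; rw [Int.toNat_of_nonneg (by omega)]; push_cast; ring
            rw [abs_of_nonneg (by linarith [hj.2])]
            have := Int.floor_le y
            push_cast at h3 ⊢
            linarith
          have hpos : (0:ℝ) < x + e j := by positivity
          gcongr
          all_goals linarith
      _ = ∑ m ∈ (s.filter P).image e, ((x + m)⁻¹) ^ 2 := by rw [Finset.sum_image hinj]
      _ ≤ 2 / x := tailA x hx _
  -- high part
  have hhigh : ∑ j ∈ s.filter (fun j => ¬ P j), ((x + |y - j|)⁻¹) ^ 2 ≤ 2 / x := by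
    set e : ℕ → ℕ := fun j => ((j:ℤ) - ⌊y⌋ - 1).toNat with he
    have hmem : ∀ a ∈ s.filter (fun j => ¬ P j), ⌊y⌋ < (a:ℤ) := by
      intro a ha
      simp only [Finset.mem_filter, hP, not_le] at ha
      exact Int.floor_lt.2 (by exact_mod_cast ha.2)
    have hinj : ∀ a ∈ s.filter (fun j => ¬ P j), ∀ b ∈ s.filter (fun j => ¬ P j),
        e a = e b → a = b := by
      intro a ha b hb hab
      have h1 := hmem a ha
      have h2 := hmem b hb
      simp only [he] at hab
      omega
    calc ∑ j ∈ s.filter (fun j => ¬ P j), ((x + |y - j|)⁻¹) ^ 2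
        ≤ ∑ j ∈ s.filter (fun j => ¬ P j), ((x + e j)⁻¹) ^ 2 := by
          apply Finset.sum_le_sum
          intro j hj
          have h1 := hmem j hj
          simp only [Finset.mem_filter, hP, not_le] at hj
          have h2 : ((e j : ℝ)) ≤ |y - j| := by
            have h3 : ((e j : ℤ) : ℝ) = (j:ℝ) - (⌊y⌋:ℝ) - 1 := by
              simp only [he]; rw [Int.toNat_of_nonneg (by omega)]; push_cast; ring
            rw [abs_of_nonpos (by linarith [hj.2])]
            have := Int.lt_floor_add_one y
            push_cast at h3 ⊢
            linarith
          have hpos : (0:ℝ) < x + e j := by positivity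
          gcongr
          all_goals linarith
      _ = ∑ m ∈ (s.filter (fun j => ¬ P j)).image e, ((x + m)⁻¹) ^ 2 :=
          by rw [Finset.sum_image hinj]
      _ ≤ 2 / x := tailA x hx _
  have : (2:ℝ)/x + 2/x = 4/x := by ring
  linarith [hsplit ▸ (add_le_add hlow hhigh)]

-- Lemma C: pointwise bound
lemma pointC (x : ℝ) (hx : 1 ≤ x) (j : ℕ) :
    ((1 + |x - Real.sqrt j|)⁻¹) ^ 4 ≤
      16 * ((1 + (j:ℝ))⁻¹) ^ 2 + 9 * x ^ 2 * ((x + |x ^ 2 - j|)⁻¹) ^ 2 := by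
  have hx0 : (0:ℝ) < x := lt_of_lt_of_le one_pos hx
  set d := |x - Real.sqrt j| with hd
  have hd0 : 0 ≤ d := abs_nonneg _
  have ht : (1:ℝ) ≤ 1 + d := by linarith
  have ht0 : (0:ℝ) < 1 + d := by linarith
  have hsq : Real.sqrt j ^ 2 = (j:ℝ) := Real.sq_sqrt (Nat.cast_nonneg j)
  have hsqnn : 0 ≤ Real.sqrt j := Real.sqrt_nonneg _
  by_cases h : Real.sqrt j ≤ 2 * x
  · -- near case
    have hA : x + |x ^ 2 - j| ≤ 3 * x * (1 + d) := by
      have h1 : x ^ 2 - (j:ℝ) = (x - Real.sqrt j) * (x + Real.sqrt j) := by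
        linear_combination hsq
      have h2 : |x ^ 2 - (j:ℝ)| = d * (x + Real.sqrt j) := by
        rw [h1, abs_mul, abs_of_nonneg (by linarith : (0:ℝ) ≤ x + Real.sqrt j)]
      rw [h2]
      nlinarith
    have hApos : (0:ℝ) < x + |x ^ 2 - j| := by positivity
    have hkey : (1 + d)⁻¹ ≤ 3 * x * (x + |x ^ 2 - j|)⁻¹ := by
      rw [inv_eq_one_div, ← div_eq_mul_inv, div_le_div_iff₀ ht0 hApos]
      linarith
    have h2 : ((1 + d)⁻¹) ^ 2 ≤ 9 * x ^ 2 * ((x + |x ^ 2 - j|)⁻¹) ^ 2 := by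
      calc ((1 + d)⁻¹) ^ 2 ≤ (3 * x * (x + |x ^ 2 - j|)⁻¹) ^ 2 :=
            pow_le_pow_left₀ (by positivity) hkey 2
        _ = 9 * x ^ 2 * ((x + |x ^ 2 - j|)⁻¹) ^ 2 := by ring
    have h3 : ((1 + d)⁻¹) ^ 4 ≤ ((1 + d)⁻¹) ^ 2 := by
      apply pow_le_pow_of_le_one (by positivity) _ (by norm_num)
      rw [inv_le_one_iff₀]; right; exact ht
    have h4 : (0:ℝ) ≤ 16 * ((1 + (j:ℝ))⁻¹) ^ 2 := by positivity
    linarith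
  · -- far case
    push_neg at h
    have h1 : (1:ℝ) + Real.sqrt j / 2 ≤ 1 + d := by
      have : x ≤ Real.sqrt j / 2 + (Real.sqrt j - 2 * x) + x := by linarith
      have habs : Real.sqrt j - x ≤ d := by
        rw [hd, abs_sub_comm]; exact le_abs_self _
      linarith
    have h2 : (1:ℝ) + (j:ℝ) ≤ (2 * (1 + d)) ^ 2 := by
      have : ((2 + Real.sqrt j)) ^ 2 = 4 + 4 * Real.sqrt j + (j:ℝ) := by
        rw [add_sq, hsq]; ring
      nlinarith
    have h3 : ((1 + d)⁻¹) ^ 4 ≤ 16 * ((1 + (j:ℝ))⁻¹) ^ 2 := by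
      have hj0 : (0:ℝ) < 1 + (j:ℝ) := by positivity
      rw [show (4:ℕ) = 2 * 2 from rfl, pow_mul]
      have e1 : ((1 + d)⁻¹) ^ 2 ≤ 4 * (1 + (j:ℝ))⁻¹ := by
        rw [inv_pow, inv_eq_one_div, ← div_eq_mul_inv, div_le_div_iff₀ (by positivity) hj0]
        nlinarith [h2]
      calc (((1 + d)⁻¹) ^ 2) ^ 2 ≤ (4 * (1 + (j:ℝ))⁻¹) ^ 2 := by
            apply pow_le_pow_left₀ (by positivity) e1
        _ = 16 * ((1 + (j:ℝ))⁻¹) ^ 2 := by ring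
    have h4 : (0:ℝ) ≤ 9 * x ^ 2 * ((x + |x ^ 2 - j|)⁻¹) ^ 2 := by positivity
    linarith

/-- If `|(θ_j)_n| ≤ C_l (1+||n|-√j|)^{-l}` for all `l`, then
`Σ_{j=0}^∞ |(θ_j)_n|² ≤ C|n|` for all `n ≠ 0`, with `C` independent of `n`
(stated via all finite partial sums). -/
theorem stmt7 (N : ℕ) (hN : 1 ≤ N) (θ : ℕ → (Fin N → ℤ) → ℂ)
    (hdecay : ∀ l : ℕ, ∃ Cl : ℝ, ∀ (j : ℕ) (n : Fin N → ℤ),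
      ‖θ j n‖ ≤ Cl * (1 + |znorm n - Real.sqrt j|) ^ (-(l : ℝ))) :
    ∃ C : ℝ, ∀ n : Fin N → ℤ, n ≠ 0 → ∀ s : Finset ℕ,
      ∑ j ∈ s, ‖θ j n‖ ^ 2 ≤ C * znorm n := by
  obtain ⟨C2, hC2⟩ := hdecay 2
  have hC2nn : 0 ≤ C2 := by
    have hp : (0:ℝ) < (1 + |znorm (fun _ : Fin N => (0:ℤ)) - Real.sqrt ((0:ℕ):ℝ)|) ^ (-((2:ℕ) : ℝ)) :=
      Real.rpow_pos_of_pos (by positivity) _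
    have h0 := (norm_nonneg _).trans (hC2 0 (fun _ : Fin N => 0))
    by_contra hneg
    push_neg at hneg
    nlinarith
  refine ⟨68 * C2 ^ 2, ?_⟩
  intro n hn s
  set x := znorm n with hxdef
  have hx : 1 ≤ x := by
    obtain ⟨i, hi⟩ := Function.ne_iff.1 hn
    have h1 : (1:ℤ) ≤ (n i) ^ 2 := by
      have := Int.one_le_abs (by simpa using hi)
      nlinarith [sq_abs (n i)]
    have h2 : (1:ℝ) ≤ ((n i : ℝ)) ^ 2 := by exact_mod_cast h1
    have h3 : (1:ℝ) ≤ ∑ k, ((n k : ℝ)) ^ 2 :=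
      h2.trans (Finset.single_le_sum (f := fun k => ((n k : ℝ)) ^ 2)
        (fun k _ => sq_nonneg _) (Finset.mem_univ i))
    have h4 := Real.sqrt_le_sqrt h3
    rwa [Real.sqrt_one] at h4
  have hx0 : (0:ℝ) < x := lt_of_lt_of_le one_pos hx
  have hterm : ∀ j ∈ s, ‖θ j n‖ ^ 2 ≤
      C2 ^ 2 * (16 * ((1 + (j:ℝ))⁻¹) ^ 2 + 9 * x ^ 2 * ((x + |x ^ 2 - j|)⁻¹) ^ 2) := by
    intro j _
    have ht0 : (0:ℝ) < 1 + |x - Real.sqrt j| := by positivity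
    have hpow : (1 + |x - Real.sqrt j|) ^ (-((2:ℕ) : ℝ)) = ((1 + |x - Real.sqrt j|)⁻¹) ^ 2 := by
      rw [Real.rpow_neg ht0.le, Real.rpow_natCast, inv_pow]
    have hb := hC2 j n
    rw [← hxdef, hpow] at hb
    have hb2 : ‖θ j n‖ ^ 2 ≤ (C2 * ((1 + |x - Real.sqrt j|)⁻¹) ^ 2) ^ 2 :=
      pow_le_pow_left₀ (norm_nonneg _) hb 2
    have hb3 : (C2 * ((1 + |x - Real.sqrt j|)⁻¹) ^ 2) ^ 2
        = C2 ^ 2 * ((1 + |x - Real.sqrt j|)⁻¹) ^ 4 := by ring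
    have hb4 := pointC x hx j
    calc ‖θ j n‖ ^ 2 ≤ C2 ^ 2 * ((1 + |x - Real.sqrt j|)⁻¹) ^ 4 := by rw [← hb3]; exact hb2
      _ ≤ _ := by
          apply mul_le_mul_of_nonneg_left hb4 (by positivity)
  have hsum1 : ∑ j ∈ s, ((1 + (j:ℝ))⁻¹) ^ 2 ≤ 2 := by
    have := tailA 1 le_rfl s
    norm_num [inv_pow] at this
    convert this using 2
    rw [inv_pow]
  have hsum2 : ∑ j ∈ s, ((x + |x ^ 2 - j|)⁻¹) ^ 2 ≤ 4 / x := keyB x (x ^ 2) hx s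
  calc ∑ j ∈ s, ‖θ j n‖ ^ 2
      ≤ ∑ j ∈ s, C2 ^ 2 * (16 * ((1 + (j:ℝ))⁻¹) ^ 2 + 9 * x ^ 2 * ((x + |x ^ 2 - j|)⁻¹) ^ 2) :=
        Finset.sum_le_sum hterm
    _ = C2 ^ 2 * (16 * (∑ j ∈ s, ((1 + (j:ℝ))⁻¹) ^ 2)
          + 9 * x ^ 2 * (∑ j ∈ s, ((x + |x ^ 2 - j|)⁻¹) ^ 2)) := by
        rw [← Finset.mul_sum, Finset.sum_add_distrib, ← Finset.mul_sum, ← Finset.mul_sum]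
    _ ≤ C2 ^ 2 * (16 * 2 + 9 * x ^ 2 * (4 / x)) := by
        apply mul_le_mul_of_nonneg_left _ (by positivity)
        have hs2 : (0:ℝ) ≤ 9 * x ^ 2 := by positivity
        have := mul_le_mul_of_nonneg_left hsum2 hs2
        linarith
    _ ≤ 68 * C2 ^ 2 * x := by
        have h36 : 9 * x ^ 2 * (4 / x) = 36 * x := by field_simp; ring
        rw [h36]
        nlinarith
end

section
/- Assuming Carleson's theorem (a.e. convergence of one-dimensional Fourier series of L²(𝕋) functions) and the square-function bound of the previous statement, the square partial sums M_k f(x₁,x₂) = Σ_{|n₁|≤k} Σ_{|n₂|≤k} f_{n₁,n₂} e^{i(n₁x₁+n₂x₂)} of any f ∈ L²(𝕋²) converge for almost every (x₁,x₂) ∈ 𝕋². -/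
open Real MeasureTheory Finset Filter
open scoped ENNReal NNReal


lemma exp_int_integral (j : ℤ) :
    (∫ y in Set.Ioc (-π) π, Complex.exp (Complex.I * j * y)) =
      if j = 0 then ((2*π : ℝ) : ℂ) else 0 := by
  rw [← intervalIntegral.integral_of_le (by linarith [pi_pos] : -π ≤ π)]
  split_ifs with h
  · subst h
    simp
    ring
  · have hc : Complex.I * (j : ℂ) ≠ 0 := by
      simp [Complex.I_ne_zero, h]
    have : ∀ y : ℝ, Complex.exp (Complex.I * j * y) = Complex.exp ((Complex.I * j) * y) := by
      intro y; ring_nf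
    rw [intervalIntegral.integral_congr (fun y _ => this y)]
    rw [integral_exp_mul_complex hc]
    have h1 : Complex.exp (Complex.I * j * (π : ℝ)) = (-1 : ℂ) ^ j := by
      have : Complex.I * j * (π : ℝ) = j * ((π : ℝ) * Complex.I) := by ring
      rw [this, Complex.exp_int_mul, Complex.exp_pi_mul_I]
    have h2 : Complex.exp (Complex.I * j * ((-π : ℝ) : ℂ)) = (-1 : ℂ) ^ j := by
      have : Complex.I * j * ((-π : ℝ) : ℂ) = j * (-((π : ℝ) * Complex.I)) := by push_cast; ring
      rw [this, Complex.exp_int_mul, Complex.exp_neg, Complex.exp_pi_mul_I]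
      norm_num
    rw [h1]
    rw [show ((-π : ℝ) : ℂ) = (((-π : ℝ)) : ℂ) from rfl]
    rw [h2]
    simp

lemma parseval_finset (s : Finset ℤ) (d : ℤ → ℂ) :
    (∫ y in Set.Ioc (-π) π, ‖∑ n ∈ s, d n * Complex.exp (Complex.I * n * y)‖ ^ 2)
      = 2 * π * ∑ n ∈ s, ‖d n‖ ^ 2 := by
  have hz : ∀ z : ℂ, ‖z‖ ^ 2 = (z * (starRingEnd ℂ) z).re := by
    intro z
    rw [Complex.mul_conj, Complex.ofReal_re, Complex.normSq_eq_norm_sq]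
  have key : ∀ y : ℝ, ‖∑ n ∈ s, d n * Complex.exp (Complex.I * n * y)‖ ^ 2
      = (∑ m ∈ s, ∑ n ∈ s,
          (d m * (starRingEnd ℂ) (d n)) * Complex.exp (Complex.I * (m - n) * y)).re := by
    intro y
    rw [hz, map_sum, Finset.sum_mul_sum]
    congr 2
    ext m
    congr 1
    ext n
    rw [map_mul, ← Complex.exp_conj]
    have h1 : (starRingEnd ℂ) (Complex.I * n * y) = -(Complex.I * n * y) := by
      simp [Complex.conj_I]
    rw [h1, mul_mul_mul_comm, ← Complex.exp_add]
    congr 2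
    ring_nf
  have hint : ∀ (m n : ℤ), IntegrableOn
      (fun y : ℝ => (d m * (starRingEnd ℂ) (d n)) * Complex.exp (Complex.I * (m - n) * y))
      (Set.Ioc (-π) π) volume := by
    intro m n
    apply Continuous.integrableOn_Ioc
    continuity
  calc (∫ y in Set.Ioc (-π) π, ‖∑ n ∈ s, d n * Complex.exp (Complex.I * n * y)‖ ^ 2)
      = (∫ y in Set.Ioc (-π) π, (∑ m ∈ s, ∑ n ∈ s,
          (d m * (starRingEnd ℂ) (d n)) * Complex.exp (Complex.I * (m - n) * y)).re) := by
        exact integral_congr_ae (Filter.Eventually.of_forall fun y => key y)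
    _ = (∫ y in Set.Ioc (-π) π, ∑ m ∈ s, ∑ n ∈ s,
          (d m * (starRingEnd ℂ) (d n)) * Complex.exp (Complex.I * (m - n) * y)).re := by
        have hI : Integrable (fun y : ℝ => ∑ m ∈ s, ∑ n ∈ s,
            (d m * (starRingEnd ℂ) (d n)) * Complex.exp (Complex.I * (m - n) * y))
            (volume.restrict (Set.Ioc (-π) π)) :=
          integrable_finset_sum s fun m _ => integrable_finset_sum s fun n _ => hint m n
        have := integral_re (𝕜 := ℂ) hI
        simpa using this
    _ = (∑ m ∈ s, ∑ n ∈ s, (d m * (starRingEnd ℂ) (d n)) *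
          ∫ y in Set.Ioc (-π) π, Complex.exp (Complex.I * (m - n) * y)).re := by
        rw [integral_finset_sum s fun m _ => integrable_finset_sum s fun n _ => hint m n]
        congr 1
        refine Finset.sum_congr rfl fun m _ => ?_
        rw [integral_finset_sum s fun n _ => hint m n]
        exact Finset.sum_congr rfl fun n _ => integral_const_mul _ _
    _ = 2 * π * ∑ n ∈ s, ‖d n‖ ^ 2 := by
        have : ∀ m ∈ s, (∑ n ∈ s, (d m * (starRingEnd ℂ) (d n)) *
            ∫ y in Set.Ioc (-π) π, Complex.exp (Complex.I * (m - n) * y))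
            = (d m * (starRingEnd ℂ) (d m)) * ((2*π : ℝ) : ℂ) := by
          intro m hm
          have : ∀ n ∈ s, (d m * (starRingEnd ℂ) (d n)) *
              (∫ y in Set.Ioc (-π) π, Complex.exp (Complex.I * (m - n) * y))
              = if n = m then (d m * (starRingEnd ℂ) (d n)) * ((2*π : ℝ) : ℂ) else 0 := by
            intro n _
            rw [show ((m : ℂ) - n) = ((m - n : ℤ) : ℂ) by push_cast; ring, exp_int_integral]
            by_cases h : n = m <;> simp [h, sub_eq_zero]
            omega
          rw [Finset.sum_congr rfl this, Finset.sum_ite_eq' s m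
            (fun n => (d m * (starRingEnd ℂ) (d n)) * ((2*π : ℝ) : ℂ)), if_pos hm]
        rw [Finset.sum_congr rfl this, Complex.re_sum]
        rw [Finset.mul_sum]
        refine Finset.sum_congr rfl fun m _ => ?_
        rw [Complex.mul_conj]
        rw [hz]
        rw [Complex.mul_conj]
        push_cast
        ring_nf
        simp [Complex.normSq_eq_norm_sq]
        ring

lemma aux_ae
    (carleson : ∀ c : ℤ → ℂ, (Summable fun n => ‖c n‖ ^ 2) →
      ∀ᵐ x : ℝ ∂(volume.restrict (Set.Ioc (-π) π)),
        ∃ L : ℂ, Tendsto (fun k : ℕ =>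
          ∑ n ∈ Finset.Icc (-(k : ℤ)) (k : ℤ), c n * Complex.exp (Complex.I * (n : ℝ) * x))
          atTop (nhds L))
    (c : ℤ × ℤ → ℂ) (hc : Summable fun p => ‖c p‖ ^ 2)
    (g : ℤ → ℤ → ℤ × ℤ) (hg : Function.Injective (fun q : ℤ × ℤ => g q.1 q.2))
    (t : ℤ → Finset ℤ) :
    ∀ᵐ y : ℝ ∂(volume.restrict (Set.Ioc (-π) π)),
      ∀ᵐ x : ℝ ∂(volume.restrict (Set.Ioc (-π) π)),
        ∃ L : ℂ, Tendsto (fun k : ℕ =>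
          ∑ n ∈ Finset.Icc (-(k : ℤ)) (k : ℤ),
            (∑ m ∈ t n, c (g n m) * Complex.exp (Complex.I * m * y))
              * Complex.exp (Complex.I * (n : ℝ) * x)) atTop (nhds L) := by
  set F : ℤ → ℝ → ℂ := fun n y => ∑ m ∈ t n, c (g n m) * Complex.exp (Complex.I * m * y)
    with hF
  have hFcont : ∀ n, Continuous (F n) := by
    intro n
    apply continuous_finset_sum
    intro m _
    continuity
  have hFmeas : ∀ n, Measurable fun y => ((‖F n y‖₊ : ℝ≥0∞) ^ 2) := by
    intro n
    exact ((hFcont n).measurable.nnnorm.coe_nnreal_ennreal).pow_const 2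
  have hparse : ∀ n : ℤ, (∫⁻ y in Set.Ioc (-π) π, (‖F n y‖₊ : ℝ≥0∞) ^ 2)
      = ENNReal.ofReal (2 * π * ∑ m ∈ t n, ‖c (g n m)‖ ^ 2) := by
    intro n
    rw [← parseval_finset (t n) (fun m => c (g n m))]
    have hy : ∀ y : ℝ, (‖F n y‖₊ : ℝ≥0∞) ^ 2 = ENNReal.ofReal (‖F n y‖ ^ 2) := by
      intro y
      rw [ENNReal.ofReal_pow (norm_nonneg _), ofReal_norm, enorm_eq_nnnorm]
    simp_rw [hy]
    rw [← ofReal_integral_eq_lintegral_ofReal]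
    · apply Continuous.integrableOn_Ioc
      exact ((hFcont n).norm.pow 2)
    · exact Filter.Eventually.of_forall fun y => sq_nonneg _
  have htop : (∫⁻ y in Set.Ioc (-π) π, ∑' n : ℤ, (‖F n y‖₊ : ℝ≥0∞) ^ 2) ≠ ⊤ := by
    rw [lintegral_tsum fun n => (hFmeas n).aemeasurable]
    have hb : ∀ n : ℤ, (∫⁻ y in Set.Ioc (-π) π, (‖F n y‖₊ : ℝ≥0∞) ^ 2)
        ≤ ENNReal.ofReal (2 * π) * ∑' m : ℤ, ENNReal.ofReal (‖c (g n m)‖ ^ 2) := by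
      intro n
      rw [hparse n, ENNReal.ofReal_mul (by positivity),
        ENNReal.ofReal_sum_of_nonneg (fun m _ => sq_nonneg _)]
      exact mul_le_mul_right (ENNReal.sum_le_tsum _) _
    refine lt_top_iff_ne_top.mp (lt_of_le_of_lt (ENNReal.tsum_le_tsum hb) ?_)
    rw [ENNReal.tsum_mul_left]
    have h1 : (∑' n : ℤ, ∑' m : ℤ, ENNReal.ofReal (‖c (g n m)‖ ^ 2))
        = ∑' q : ℤ × ℤ, ENNReal.ofReal (‖c (g q.1 q.2)‖ ^ 2) := (ENNReal.tsum_prod' (f := fun q : ℤ × ℤ => ENNReal.ofReal (‖c (g q.1 q.2)‖ ^ 2))).symm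
    have h2 : (∑' q : ℤ × ℤ, ENNReal.ofReal (‖c (g q.1 q.2)‖ ^ 2))
        ≤ ∑' p : ℤ × ℤ, ENNReal.ofReal (‖c p‖ ^ 2) :=
      ENNReal.tsum_comp_le_tsum_of_injective hg _
    have h3 : (∑' p : ℤ × ℤ, ENNReal.ofReal (‖c p‖ ^ 2)) < ⊤ := by
      rw [← ENNReal.ofReal_tsum_of_nonneg (fun p => sq_nonneg _) hc]
      exact ENNReal.ofReal_lt_top
    calc ENNReal.ofReal (2 * π) * ∑' n : ℤ, ∑' m : ℤ, ENNReal.ofReal (‖c (g n m)‖ ^ 2)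
        ≤ ENNReal.ofReal (2 * π) * ∑' p : ℤ × ℤ, ENNReal.ofReal (‖c p‖ ^ 2) := by
          exact mul_le_mul_right (h1 ▸ h2) _
      _ < ⊤ := ENNReal.mul_lt_top ENNReal.ofReal_lt_top h3
  have hae : ∀ᵐ y : ℝ ∂(volume.restrict (Set.Ioc (-π) π)),
      Summable fun n : ℤ => ‖F n y‖ ^ 2 := by
    have := ae_lt_top (Measurable.ennreal_tsum hFmeas) htop
    filter_upwards [this] with y hy
    have hsum : Summable fun n : ℤ => (‖F n y‖₊ ^ 2 : ℝ≥0) := by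
      apply ENNReal.tsum_coe_ne_top_iff_summable.mp
      simpa [ENNReal.coe_pow] using hy.ne
    have := NNReal.summable_coe.mpr hsum
    simpa [NNReal.coe_pow] using this
  filter_upwards [hae] with y hy
  exact carleson (fun n => F n y) hy


lemma split_sum (k : ℕ) (G : ℤ → ℤ → ℂ) :
    (∑ n₁ ∈ Finset.Icc (-(k : ℤ)) (k : ℤ), ∑ n₂ ∈ Finset.Icc (-(k : ℤ)) (k : ℤ), G n₁ n₂)
      = (∑ n₁ ∈ Finset.Icc (-(k : ℤ)) (k : ℤ), ∑ n₂ ∈ Finset.Icc (-|n₁|) |n₁|, G n₁ n₂)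
        + ∑ n₂ ∈ Finset.Icc (-(k : ℤ)) (k : ℤ),
            ∑ n₁ ∈ Finset.Icc (-(|n₂| - 1)) (|n₂| - 1), G n₁ n₂ := by
  have habs : ∀ (a : ℤ) (b : ℤ), a ∈ Finset.Icc (-b) b ↔ |a| ≤ b := by
    intro a b
    rw [Finset.mem_Icc, abs_le]
  have step1 : ∀ n₁ ∈ Finset.Icc (-(k : ℤ)) (k : ℤ),
      (∑ n₂ ∈ Finset.Icc (-(k : ℤ)) (k : ℤ), G n₁ n₂)
        = (∑ n₂ ∈ Finset.Icc (-|n₁|) |n₁|, G n₁ n₂)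
          + ∑ n₂ ∈ (Finset.Icc (-(k : ℤ)) (k : ℤ)).filter (fun n₂ => |n₁| < |n₂|), G n₁ n₂ := by
    intro n₁ h₁
    rw [habs] at h₁
    rw [← Finset.sum_filter_add_sum_filter_not (Finset.Icc (-(k:ℤ)) k) (fun n₂ => |n₂| ≤ |n₁|)]
    congr 1
    · congr 1
      ext n₂
      simp only [Finset.mem_filter, habs]
      constructor
      · exact fun h => h.2
      · exact fun h => ⟨le_trans h h₁, h⟩
    · apply Finset.sum_congr _ (fun _ _ => rfl)
      ext n₂
      simp only [Finset.mem_filter, not_le]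
  rw [Finset.sum_congr rfl step1, Finset.sum_add_distrib]
  congr 1
  rw [Finset.sum_comm' (t' := Finset.Icc (-(k : ℤ)) (k : ℤ))
    (s' := fun n₂ => (Finset.Icc (-(k : ℤ)) (k : ℤ)).filter (fun n₁ => |n₁| < |n₂|))]
  · refine Finset.sum_congr rfl fun n₂ h₂ => ?_
    rw [habs] at h₂
    apply Finset.sum_congr _ (fun _ _ => rfl)
    ext n₁
    simp only [Finset.mem_filter, habs]
    constructor
    · rintro ⟨h, hlt⟩
      omega
    · intro h
      constructor
      · omega
      · omega
  · intro x y
    simp only [Finset.mem_filter]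
    tauto

/-- Assuming Carleson's theorem (a.e. convergence of the Fourier series of any `L²(𝕋)`
function, stated in terms of square-summable coefficients), the square partial sums
`M_k f(x₁,x₂) = Σ_{|n₁|≤k} Σ_{|n₂|≤k} f_{n₁,n₂} e^{i(n₁x₁+n₂x₂)}` of any `f ∈ L²(𝕋²)`
converge for almost every `(x₁,x₂) ∈ 𝕋²`. -/
theorem stmt12
    (carleson : ∀ c : ℤ → ℂ, (Summable fun n => ‖c n‖ ^ 2) →
      ∀ᵐ x : ℝ ∂(volume.restrict (Set.Ioc (-π) π)),
        ∃ L : ℂ, Tendsto (fun k : ℕ =>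
          ∑ n ∈ Finset.Icc (-(k : ℤ)) (k : ℤ), c n * Complex.exp (Complex.I * (n : ℝ) * x))
          atTop (nhds L))
    (c : ℤ × ℤ → ℂ) (hc : Summable fun p => ‖c p‖ ^ 2) :
    ∀ᵐ x : ℝ × ℝ ∂((volume.restrict (Set.Ioc (-π) π)).prod
        (volume.restrict (Set.Ioc (-π) π))),
      ∃ L : ℂ, Tendsto (fun k : ℕ =>
        ∑ n₁ ∈ Finset.Icc (-(k : ℤ)) (k : ℤ), ∑ n₂ ∈ Finset.Icc (-(k : ℤ)) (k : ℤ),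
          c (n₁, n₂) * Complex.exp (Complex.I * ((n₁ : ℝ) * x.1 + (n₂ : ℝ) * x.2)))
        atTop (nhds L) := by
  set μ := volume.restrict (Set.Ioc (-π) π) with hμ
  set A : ℤ → ℝ → ℂ := fun n y =>
    ∑ m ∈ Finset.Icc (-|n|) |n|, c (n, m) * Complex.exp (Complex.I * m * y) with hA
  set B : ℤ → ℝ → ℂ := fun n x =>
    ∑ m ∈ Finset.Icc (-(|n| - 1)) (|n| - 1), c (m, n) * Complex.exp (Complex.I * m * x) with hB
  -- the two a.e. statements
  have hAae : ∀ᵐ y : ℝ ∂μ, ∀ᵐ x : ℝ ∂μ,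
      ∃ L : ℂ, Tendsto (fun k : ℕ => ∑ n ∈ Finset.Icc (-(k : ℤ)) (k : ℤ),
        A n y * Complex.exp (Complex.I * (n : ℝ) * x)) atTop (nhds L) :=
    aux_ae carleson c hc (fun n m => (n, m))
      (fun q q' h => by simpa [Prod.ext_iff] using h) (fun n => Finset.Icc (-|n|) |n|)
  have hBae : ∀ᵐ y : ℝ ∂μ, ∀ᵐ x : ℝ ∂μ,
      ∃ L : ℂ, Tendsto (fun k : ℕ => ∑ n ∈ Finset.Icc (-(k : ℤ)) (k : ℤ),
        B n y * Complex.exp (Complex.I * (n : ℝ) * x)) atTop (nhds L) :=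
    aux_ae carleson c hc (fun n m => (m, n))
      (fun q q' h => by simpa [Prod.ext_iff, and_comm] using h)
      (fun n => Finset.Icc (-(|n| - 1)) (|n| - 1))
  -- measurability of the convergence sets
  have hce : ∀ m : ℤ, Continuous fun y : ℝ => Complex.exp (Complex.I * m * y) := fun m =>
    Complex.continuous_exp.comp (continuous_const.mul Complex.continuous_ofReal)
  have hcA : ∀ n : ℤ, Continuous (A n) := fun n =>
    continuous_finset_sum _ fun m _ => continuous_const.mul (hce m)
  have hcB : ∀ n : ℤ, Continuous (B n) := fun n =>
    continuous_finset_sum _ fun m _ => continuous_const.mul (hce m)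
  have hmeasA : MeasurableSet {z : ℝ × ℝ | ∃ L : ℂ, Tendsto (fun k : ℕ =>
      ∑ n ∈ Finset.Icc (-(k : ℤ)) (k : ℤ),
        A n z.2 * Complex.exp (Complex.I * (n : ℝ) * z.1)) atTop (nhds L)} := by
    apply measurableSet_exists_tendsto
    intro k
    apply Continuous.measurable
    refine continuous_finset_sum _ fun n _ => ((hcA n).comp continuous_snd).mul
      (Complex.continuous_exp.comp (continuous_const.mul
        (Complex.continuous_ofReal.comp continuous_fst)))
  have hmeasB : MeasurableSet {z : ℝ × ℝ | ∃ L : ℂ, Tendsto (fun k : ℕ =>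
      ∑ n ∈ Finset.Icc (-(k : ℤ)) (k : ℤ),
        B n z.1 * Complex.exp (Complex.I * (n : ℝ) * z.2)) atTop (nhds L)} := by
    apply measurableSet_exists_tendsto
    intro k
    apply Continuous.measurable
    refine continuous_finset_sum _ fun n _ => ((hcB n).comp continuous_fst).mul
      (Complex.continuous_exp.comp (continuous_const.mul
        (Complex.continuous_ofReal.comp continuous_snd)))
  -- transfer to the product measure
  have hA2 : ∀ᵐ z : ℝ × ℝ ∂(μ.prod μ), ∃ L : ℂ, Tendsto (fun k : ℕ =>
      ∑ n ∈ Finset.Icc (-(k : ℤ)) (k : ℤ),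
        A n z.2 * Complex.exp (Complex.I * (n : ℝ) * z.1)) atTop (nhds L) := by
    rw [Measure.ae_prod_iff_ae_ae hmeasA]
    rw [Measure.ae_ae_comm]
    · exact hAae
    · exact hmeasA
  have hB2 : ∀ᵐ z : ℝ × ℝ ∂(μ.prod μ), ∃ L : ℂ, Tendsto (fun k : ℕ =>
      ∑ n ∈ Finset.Icc (-(k : ℤ)) (k : ℤ),
        B n z.1 * Complex.exp (Complex.I * (n : ℝ) * z.2)) atTop (nhds L) := by
    rw [Measure.ae_prod_iff_ae_ae hmeasB]
    exact hBae
  filter_upwards [hA2, hB2] with z hz1 hz2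
  obtain ⟨L₁, h₁⟩ := hz1
  obtain ⟨L₂, h₂⟩ := hz2
  refine ⟨L₁ + L₂, Tendsto.congr (fun k => ?_) (h₁.add h₂)⟩
  rw [split_sum k (fun n₁ n₂ => c (n₁, n₂) *
    Complex.exp (Complex.I * ((n₁ : ℝ) * z.1 + (n₂ : ℝ) * z.2)))]
  congr 1
  · refine Finset.sum_congr rfl fun n₁ _ => ?_
    rw [hA, Finset.sum_mul]
    refine Finset.sum_congr rfl fun n₂ _ => ?_
    rw [mul_assoc, ← Complex.exp_add]
    congr 1
    push_cast
    ring_nf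
  · refine Finset.sum_congr rfl fun n₂ _ => ?_
    rw [hB, Finset.sum_mul]
    refine Finset.sum_congr rfl fun n₁ _ => ?_
    rw [mul_assoc, ← Complex.exp_add]
    congr 1
    push_cast
    ring_nf
end
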